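/- For n ≥ 3, if a system C = (1, c₂, ..., cₙ) is canonical, then the subsystem (1, c₂, c₃) is canonical. -/
import Mathlib

open Finset
set_option linter.unusedSectionVars false

/-- `x` is a representation of value `v` in the coin system `c 1, …, c n`. -/
def IsRepr (n : ℕ) (c : ℕ → ℕ) (v : ℕ) (x : ℕ → ℕ) : Prop :=
  ∑ i ∈ Finset.Icc 1 n, c i * x i = v

/-- Minimum number of coins over all representations of `v`. -/
noncomputable def opt (n : ℕ) (c : ℕ → ℕ) (v : ℕ) : ℕ :=
  sInf {k | ∃ x : ℕ → ℕ, IsRepr n c v x ∧ ∑ i ∈ Finset.Icc 1 n, x i = k}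

/-- Number of coins used by the greedy algorithm to pay `v`. -/
def grd (n : ℕ) (c : ℕ → ℕ) (v : ℕ) : ℕ :=
  if hv : v = 0 then 0
  else
    let m := ((Finset.Icc 1 n).filter (fun i => c i ≤ v)).sup c
    if hm : 0 < m then grd n c (v - m) + 1 else 0
termination_by v
decreasing_by omega

/-- The system is canonical: greedy is optimal for every positive value. -/
def Canonical (n : ℕ) (c : ℕ → ℕ) : Prop :=
  ∀ v, 0 < v → opt n c v = grd n c v

/-- `w` is a counterexample to the system. -/
def IsCex (n : ℕ) (c : ℕ → ℕ) (w : ℕ) : Prop :=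
  0 < w ∧ opt n c w < grd n c w

/-- `w` is the minimum counterexample to the system. -/
def MinCex (n : ℕ) (c : ℕ → ℕ) (w : ℕ) : Prop :=
  IsCex n c w ∧ ∀ u, IsCex n c u → w ≤ u

/-- A (currency) system: first coin is `1` and coins strictly increase. -/
def IsSystem (n : ℕ) (c : ℕ → ℕ) : Prop :=
  c 1 = 1 ∧ StrictMonoOn c (Set.Icc 1 n)

/-! ### Auxiliary definitions -/

/-- cost of paying `t` with coins `1` and `c 2` greedily. -/
def tl (c : ℕ → ℕ) (t : ℕ) : ℕ := t / c 2 + t % c 2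

/-- `γ` is one of the coins. -/
def IsCoin (n : ℕ) (c : ℕ → ℕ) (γ : ℕ) : Prop := ∃ i ∈ Finset.Icc 1 n, c i = γ

/-- largest coin `≤ v` (or 0). -/
def mcoin (n : ℕ) (c : ℕ → ℕ) (v : ℕ) : ℕ :=
  ((Finset.Icc 1 n).filter (fun i => c i ≤ v)).sup c

section Dev

variable {n : ℕ} {c : ℕ → ℕ}

lemma grd_zero : grd n c 0 = 0 := by rw [grd]; simp

lemma grd_succ {v : ℕ} (hv : v ≠ 0) (hm : 0 < mcoin n c v) :
    grd n c v = grd n c (v - mcoin n c v) + 1 := by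
  conv_lhs => rw [grd]
  simp only [dif_neg hv]
  exact dif_pos hm

/-! system facts -/

variable (hn : 3 ≤ n) (h1 : c 1 = 1) (hmono : StrictMonoOn c (Set.Icc 1 n))

section SysFacts
include hn hmono

lemma mem_icc_of (i : ℕ) (h1i : 1 ≤ i) (hin : i ≤ n) : i ∈ Finset.Icc 1 n := by
  rw [Finset.mem_Icc]; omega

lemma c_lt_c {i j : ℕ} (h1i : 1 ≤ i) (hij : i < j) (hjn : j ≤ n) : c i < c j := by
  apply hmono
  · rw [Set.mem_Icc]; omega
  · rw [Set.mem_Icc]; omega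
  · omega

lemma c_le_c {i j : ℕ} (h1i : 1 ≤ i) (hij : i ≤ j) (hjn : j ≤ n) : c i ≤ c j := by
  rcases eq_or_lt_of_le hij with rfl | h
  · exact le_refl _
  · exact le_of_lt (c_lt_c hn hmono h1i h hjn)

lemma coin_le_top {γ : ℕ} (h : IsCoin n c γ) : γ ≤ c n := by
  obtain ⟨i, hi, rfl⟩ := h
  simp [Finset.mem_Icc] at hi
  exact c_le_c hn hmono hi.1 hi.2 (le_refl n)

omit hmono in
lemma coin_idx (i : ℕ) (h1i : 1 ≤ i) (hin : i ≤ n) : IsCoin n c (c i) :=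
  ⟨i, by rw [Finset.mem_Icc]; omega, rfl⟩

include h1 in
lemma hc2 : 2 ≤ c 2 := by
  have := c_lt_c hn hmono (i := 1) (j := 2) (by omega) (by omega) (by omega)
  omega

lemma hc23 : c 2 < c 3 := c_lt_c hn hmono (by omega) (by omega) (by omega)

include h1 in
lemma coin_ge_c3 {γ : ℕ} (h : IsCoin n c γ) (h2 : c 2 < γ) : c 3 ≤ γ := by
  obtain ⟨i, hi, rfl⟩ := h
  simp [Finset.mem_Icc] at hi
  rcases Nat.lt_or_ge i 3 with h3 | h3
  · exfalso
    have hc12 : c 1 < c 2 := c_lt_c hn hmono (by omega) (by omega) (by omega)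
    interval_cases i <;> omega
  · exact c_le_c hn hmono (by omega) h3 hi.2

end SysFacts

/-! tl facts -/

section TlFacts

lemma tl_zero : tl c 0 = 0 := by simp [tl]

lemma tl_small {t : ℕ} (h : t < c 2) : tl c t = t := by
  simp [tl, Nat.div_eq_of_lt h, Nat.mod_eq_of_lt h]

lemma tl_step (hc : 0 < c 2) (w : ℕ) : tl c (c 2 + w) = tl c w + 1 := by
  simp [tl, Nat.add_div_left _ hc, Nat.add_mod_left]
  omega

lemma tl_pos (hc : 0 < c 2) {t : ℕ} (ht : 0 < t) : 0 < tl c t := by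
  rcases Nat.lt_or_ge t (c 2) with h | h
  · rw [tl_small h]; omega
  · obtain ⟨w, rfl⟩ := Nat.exists_eq_add_of_le h
    rw [tl_step hc]; omega

lemma tl_le_one {t : ℕ} (hc : 0 < c 2) (h : tl c t ≤ 1) : t = 0 ∨ t = 1 ∨ t = c 2 := by
  rcases Nat.lt_or_ge t (c 2) with h' | h'
  · rw [tl_small h'] at h; omega
  · obtain ⟨w, rfl⟩ := Nat.exists_eq_add_of_le h'
    rw [tl_step hc] at h
    have hw : tl c w = 0 := by omega
    rcases Nat.lt_or_ge w (c 2) with h'' | h''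
    · rw [tl_small h''] at hw; omega
    · obtain ⟨w', rfl⟩ := Nat.exists_eq_add_of_le h''
      rw [tl_step hc] at hw; omega

lemma tl_ge_two {t : ℕ} (hc : 0 < c 2) (h0 : t ≠ 0) (ht1 : t ≠ 1) (ht2 : t ≠ c 2) :
    2 ≤ tl c t := by
  by_contra h
  have : tl c t ≤ 1 := by omega
  rcases tl_le_one hc this with h' | h' | h' <;> omega

lemma tl_le_self (hc : 0 < c 2) (t : ℕ) : tl c t ≤ t := by
  unfold tl
  have h := Nat.div_add_mod t (c 2)
  have : t / c 2 ≤ c 2 * (t / c 2) := Nat.le_mul_of_pos_left _ hc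
  omega

lemma tl_combo (hc : 0 < c 2) (b a : ℕ) : tl c (c 2 * b + a) ≤ b + a := by
  induction b with
  | zero => simpa using tl_le_self hc a
  | succ k ih =>
      have : c 2 * (k + 1) + a = c 2 + (c 2 * k + a) := by ring
      rw [this, tl_step hc]
      omega

end TlFacts

/-! opt facts -/

section OptFacts
include hn h1

lemma repr_single (i₀ : ℕ) (hi : i₀ ∈ Finset.Icc 1 n) (a : ℕ) :
    IsRepr n c (c i₀ * a) (fun i => if i = i₀ then a else 0) ∧
    ∑ i ∈ Finset.Icc 1 n, (fun i => if i = i₀ then a else 0) i = a := by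
  constructor
  · unfold IsRepr
    rw [Finset.sum_eq_single_of_mem i₀ hi]
    · simp
    · intro b _ hb; simp [hb]
  · rw [Finset.sum_eq_single_of_mem i₀ hi]
    · simp
    · intro b _ hb; simp [hb]

lemma opt_nonempty (v : ℕ) :
    {k | ∃ x : ℕ → ℕ, IsRepr n c v x ∧ ∑ i ∈ Finset.Icc 1 n, x i = k}.Nonempty := by
  obtain ⟨hr, hs⟩ := repr_single hn h1 1 (by rw [Finset.mem_Icc]; omega) v
  rw [h1, one_mul] at hr
  exact ⟨v, fun i => if i = 1 then v else 0, hr, hs⟩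

lemma opt_le_of_repr {v k : ℕ} (x : ℕ → ℕ) (hx : IsRepr n c v x)
    (hk : ∑ i ∈ Finset.Icc 1 n, x i = k) : opt n c v ≤ k :=
  Nat.sInf_le ⟨x, hx, hk⟩

lemma opt_spec (v : ℕ) :
    ∃ x : ℕ → ℕ, IsRepr n c v x ∧ ∑ i ∈ Finset.Icc 1 n, x i = opt n c v :=
  Nat.sInf_mem (opt_nonempty hn h1 v)

lemma opt_le_self (v : ℕ) : opt n c v ≤ v := by
  obtain ⟨hr, hs⟩ := repr_single hn h1 1 (by rw [Finset.mem_Icc]; omega) v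
  rw [h1, one_mul] at hr
  exact opt_le_of_repr hn h1 _ hr hs

lemma opt_add_le (u v : ℕ) : opt n c (u + v) ≤ opt n c u + opt n c v := by
  obtain ⟨x, hx, hxs⟩ := opt_spec hn h1 u
  obtain ⟨y, hy, hys⟩ := opt_spec hn h1 v
  refine opt_le_of_repr hn h1 (fun i => x i + y i) ?_ ?_
  · unfold IsRepr at *
    simp only [Nat.mul_add, Finset.sum_add_distrib, hx, hy]
  · rw [Finset.sum_add_distrib, hxs, hys]

lemma opt_coin_le {γ : ℕ} (h : IsCoin n c γ) : opt n c γ ≤ 1 := by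
  obtain ⟨i, hi, rfl⟩ := h
  obtain ⟨hr, hs⟩ := repr_single hn h1 i hi 1
  rw [mul_one] at hr
  exact opt_le_of_repr hn h1 _ hr hs

lemma opt_mul_coin {γ : ℕ} (h : IsCoin n c γ) (k : ℕ) : opt n c (k * γ) ≤ k := by
  induction k with
  | zero =>
      simp only [Nat.zero_mul]
      obtain ⟨hr, hs⟩ := repr_single hn h1 1 (by rw [Finset.mem_Icc]; omega) 0
      rw [mul_zero] at hr
      exact opt_le_of_repr hn h1 _ hr hs
  | succ k ih =>
      have : (k + 1) * γ = k * γ + γ := by ring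
      rw [this]
      calc opt n c (k * γ + γ) ≤ opt n c (k * γ) + opt n c γ := opt_add_le hn h1 _ _
      _ ≤ k + 1 := by have := opt_coin_le hn h1 h; omega

end OptFacts

/-! mcoin facts -/

section McoinFacts
include hn h1

lemma mcoin_pos {v : ℕ} (hv : 1 ≤ v) : 1 ≤ mcoin n c v := by
  have h1n : (1 : ℕ) ∈ (Finset.Icc 1 n).filter (fun i => c i ≤ v) := by
    simp [Finset.mem_Icc]; omega
  calc 1 = c 1 := h1.symm
  _ ≤ _ := Finset.le_sup h1n

omit hn h1 in
lemma mcoin_le (v : ℕ) : mcoin n c v ≤ v := by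
  apply Finset.sup_le
  intro i hi
  exact (Finset.mem_filter.mp hi).2

lemma mcoin_coin {v : ℕ} (hv : 1 ≤ v) : IsCoin n c (mcoin n c v) := by
  have hne : ((Finset.Icc 1 n).filter (fun i => c i ≤ v)).Nonempty := by
    refine ⟨1, ?_⟩; simp [Finset.mem_Icc]; omega
  obtain ⟨i, hi, hv'⟩ := Finset.exists_mem_eq_sup _ hne c
  exact ⟨i, Finset.mem_filter.mp hi |>.1, hv'.symm⟩

omit hn h1 in
lemma le_mcoin {γ v : ℕ} (h : IsCoin n c γ) (hle : γ ≤ v) : γ ≤ mcoin n c v := by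
  obtain ⟨i, hi, rfl⟩ := h
  exact Finset.le_sup (by simp [Finset.mem_filter]; exact ⟨by simpa using hi, hle⟩)

lemma mcoin_eq {b v : ℕ} (hb : IsCoin n c b) (hbv : b ≤ v)
    (hmax : ∀ γ, IsCoin n c γ → b < γ → γ ≤ v → False) : mcoin n c v = b := by
  refine le_antisymm ?_ (le_mcoin hb hbv)
  apply Finset.sup_le
  intro i hi
  rw [Finset.mem_filter] at hi
  by_contra hgt
  exact hmax (c i) ⟨i, hi.1, rfl⟩ (by omega) hi.2

end McoinFacts

/-! greedy structure -/

section GrdFacts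
include hn h1 hmono

lemma mcoin_small1 {u : ℕ} (h1u : 1 ≤ u) (huc : u < c 2) : mcoin n c u = 1 := by
  refine mcoin_eq hn h1 ⟨1, by rw [Finset.mem_Icc]; omega, h1⟩ (by omega) ?_
  intro γ hγ hlt hle
  obtain ⟨i, hi, rfl⟩ := hγ
  rw [Finset.mem_Icc] at hi
  have h2i : 2 ≤ i := by
    rcases Nat.lt_or_ge i 2 with hh | hh
    · have hi1 : i = 1 := by omega
      rw [hi1, h1] at hlt
      omega
    · exact hh
  have hcc : c 2 ≤ c i := c_le_c hn hmono (by omega) h2i hi.2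
  omega

lemma mcoin_small2 {u : ℕ} (h1u : c 2 ≤ u) (huc : u < c 3) : mcoin n c u = c 2 := by
  refine mcoin_eq hn h1 ⟨2, by rw [Finset.mem_Icc]; omega, rfl⟩ h1u ?_
  intro γ hγ hlt hle
  have := coin_ge_c3 hn h1 hmono hγ hlt
  omega

lemma grd_small : ∀ u, u < c 3 → grd n c u = tl c u := by
  have hc2' : 2 ≤ c 2 := hc2 hn h1 hmono
  intro u
  induction u using Nat.strong_induction_on with
  | _ u IH =>
    intro hu
    rcases Nat.eq_zero_or_pos u with rfl | hpos
    · rw [grd_zero, tl_zero]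
    rcases Nat.lt_or_ge u (c 2) with h | h
    · have hm : mcoin n c u = 1 := mcoin_small1 hn h1 hmono hpos h
      rw [grd_succ (by omega) (by omega), hm, IH (u - 1) (by omega) (by omega),
        tl_small (by omega), tl_small (by omega)]
      omega
    · have hm : mcoin n c u = c 2 := mcoin_small2 hn h1 hmono h hu
      obtain ⟨w, rfl⟩ := Nat.exists_eq_add_of_le h
      rw [grd_succ (by omega) (by omega), hm, tl_step (by omega)]
      congr 1
      rw [Nat.add_sub_cancel_left]
      exact IH w (by omega) (by omega)

lemma mcoin_window {b v : ℕ} (hb : IsCoin n c b) (hbv : b ≤ v)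
    (hno : ∀ γ, IsCoin n c γ → b < γ → γ ≤ v → False) : mcoin n c v = b :=
  mcoin_eq hn h1 hb hbv hno

/-- If the greedy coin of `v` is `b` and the remainder is `< c 3`,
greedy costs `1 + tl (v - b)`. -/
lemma grd_window {b v : ℕ} (hb : IsCoin n c b) (hb1 : 1 ≤ b) (hbv : b ≤ v)
    (hrem : v - b < c 3)
    (hno : ∀ γ, IsCoin n c γ → b < γ → γ ≤ v → False) :
    grd n c v = tl c (v - b) + 1 := by
  have hm : mcoin n c v = b := mcoin_window hn h1 hmono hb hbv hno
  rw [grd_succ (by omega) (by omega), hm, grd_small hn h1 hmono _ hrem]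

/-- greedy is achievable by a representation, hence `opt ≤ grd`. -/
lemma opt_le_grd : ∀ v, opt n c v ≤ grd n c v := by
  intro v
  induction v using Nat.strong_induction_on with
  | _ v IH =>
    rcases Nat.eq_zero_or_pos v with rfl | hpos
    · rw [grd_zero]
      obtain ⟨hr, hs⟩ := repr_single hn h1 1 (by rw [Finset.mem_Icc]; omega) 0
      rw [mul_zero] at hr
      exact opt_le_of_repr hn h1 _ hr hs
    · have hm1 : 1 ≤ mcoin n c v := mcoin_pos hn h1 hpos
      have hmv : mcoin n c v ≤ v := mcoin_le v
      rw [grd_succ (by omega) (by omega)]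
      have hcoin : IsCoin n c (mcoin n c v) := mcoin_coin hn h1 hpos
      have h2 : v = (v - mcoin n c v) + mcoin n c v := by omega
      calc opt n c v = opt n c ((v - mcoin n c v) + mcoin n c v) := by rw [← h2]
      _ ≤ opt n c (v - mcoin n c v) + opt n c (mcoin n c v) := opt_add_le hn h1 _ _
      _ ≤ grd n c (v - mcoin n c v) + 1 := by
          have := IH (v - mcoin n c v) (by omega)
          have := opt_coin_le hn h1 hcoin
          omega

end GrdFacts

/-! ### Hard direction -/

section Hard
include hn h1 hmono

variable (hcan : Canonical n c)

include hcan in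
lemma opt_window {b j : ℕ} (hb : IsCoin n c b) (hb1 : 1 ≤ b) (hj : j < c 3)
    (hno : ∀ γ, IsCoin n c γ → b < γ → γ ≤ b + j → False) :
    opt n c (b + j) = tl c j + 1 := by
  have hg := grd_window hn h1 hmono hb hb1 (by omega) (by omega : b + j - b < c 3) hno
  have heq : b + j - b = j := by omega
  rw [heq] at hg
  rw [hcan (b + j) (by omega), hg]

include hcan in
lemma witgap {b j : ℕ} (hb : IsCoin n c b) (hb3 : c 3 ≤ b) (hj0 : 0 < j) (hj : j < c 3)
    (hopt : opt n c (b + j) ≤ tl c j) : ∃ γ, IsCoin n c γ ∧ b < γ ∧ γ ≤ b + j := by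
  by_contra hcon
  push_neg at hcon
  have hb1 : 1 ≤ b := by
    have := hc23 hn hmono
    have := hc2 hn h1 hmono
    omega
  have := opt_window hn h1 hmono hcan hb hb1 hj
    (fun γ hγ h1' h2' => by have := hcon γ hγ h1'; omega)
  omega

omit hmono in
lemma pc_coin {m : ℕ} (hm : 1 < m) :
    IsCoin n c (((Finset.Icc 1 n).filter (fun i => c i < m)).sup c) := by
  have hne : ((Finset.Icc 1 n).filter (fun i => c i < m)).Nonempty := by
    refine ⟨1, ?_⟩
    rw [Finset.mem_filter, Finset.mem_Icc]
    omega
  obtain ⟨i, hi, hv'⟩ := Finset.exists_mem_eq_sup _ hne c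
  exact ⟨i, (Finset.mem_filter.mp hi).1, hv'.symm⟩

omit hn h1 hmono in
lemma pc_lt {m : ℕ} (hm : 0 < m) :
    ((Finset.Icc 1 n).filter (fun i => c i < m)).sup c < m := by
  rw [Finset.sup_lt_iff (by simpa using hm : (⊥ : ℕ) < m)]
  intro i hi
  exact (Finset.mem_filter.mp hi).2

omit hn h1 hmono in
lemma le_pc {γ m : ℕ} (h : IsCoin n c γ) (hlt : γ < m) :
    γ ≤ ((Finset.Icc 1 n).filter (fun i => c i < m)).sup c := by
  obtain ⟨i, hi, rfl⟩ := h
  exact Finset.le_sup (by rw [Finset.mem_filter]; exact ⟨hi, hlt⟩)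

variable (q r : ℕ) (hQ : q * c 2 = c 3 + r) (hrlt : r < c 2) (hq2 : 2 ≤ q) (hqr : q ≤ r)

include hcan hQ hrlt hq2 hqr in
lemma hard_main : ∀ m, IsCoin n c m → c 3 ≤ m →
    (∃ j, 0 < j ∧ j < c 3 ∧ opt n c (m + j) ≤ tl c j) ∧
    ((r + 1 = c 2 ∧ IsCoin n c (m + (c 3 - 1)) ∧
      (∀ γ, IsCoin n c γ → m < γ → γ < m + (c 3 - 1) → False)) → False) := by
  have hc2' : 2 ≤ c 2 := hc2 hn h1 hmono
  have hc23' : c 2 < c 3 := hc23 hn hmono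
  have hc2pos : 0 < c 2 := by omega
  have hc3r : 2 ≤ r := by omega
  have hc2'' : 3 ≤ c 2 := by omega
  have hQ2 : 2 * c 2 ≤ q * c 2 := Nat.mul_le_mul_right _ hq2
  have hoptQ : opt n c (q * c 2) ≤ q := opt_mul_coin hn h1 (coin_idx hn (i := 2) (by omega) (by omega)) q
  have hcoin3 : IsCoin n c (c 3) := coin_idx hn (i := 3) (by omega) hn
  have hcoin2 : IsCoin n c (c 2) := coin_idx hn (i := 2) (by omega) (by omega)
  intro m
  induction m using Nat.strong_induction_on with
  | _ m IH =>
  intro hm hm3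
  -- gap fact: if p < m is a coin ≥ c3 with no other coins in (p, m), then m - p ≤ c3 - 1
  have gapm : ∀ p, p < m → IsCoin n c p → c 3 ≤ p →
      (∀ γ, IsCoin n c γ → p < γ → γ < m → False) → m ≤ p + (c 3 - 1) := by
    intro p hpm hpc hp3 hnb
    obtain ⟨j, hj0, hjc, hjo⟩ := (IH p hpm hpc hp3).1
    obtain ⟨γ, hγc, hγ1, hγ2⟩ := witgap hn h1 hmono hcan hpc hp3 hj0 hjc hjo
    rcases Nat.lt_or_ge γ m with h | h
    · exact absurd (hnb γ hγc hγ1 h) (by simp)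
    · omega
  constructor
  · -- WITNESS
    by_cases hex : ∃ γ, IsCoin n c γ ∧ m < γ ∧ γ < m + c 3
    · obtain ⟨γ, hγc, hγ1, hγ2⟩ := hex
      refine ⟨γ - m, by omega, by omega, ?_⟩
      have he : m + (γ - m) = γ := by omega
      rw [he]
      calc opt n c γ ≤ 1 := opt_coin_le hn h1 hγc
      _ ≤ tl c (γ - m) := tl_pos hc2pos (by omega)
    · push_neg at hex
      have hnb : ∀ γ, IsCoin n c γ → m < γ → γ < m + c 3 → False := by
        intro γ hγc h1' h2'
        have := hex γ hγc h1'
        omega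
      rcases eq_or_lt_of_le hm3 with hmeq | hmlt
      · -- m = c 3 : witness j = r
        refine ⟨r, by omega, by omega, ?_⟩
        have he : m + r = q * c 2 := by omega
        rw [he, tl_small hrlt]
        omega
      · -- m > c 3 : use previous coin p
        set p := ((Finset.Icc 1 n).filter (fun i => c i < m)).sup c with hp
        have hpc : IsCoin n c p := pc_coin hn h1 (by omega)
        have hplt : p < m := pc_lt (by omega)
        have hp3 : c 3 ≤ p := le_pc hcoin3 hmlt
        have hpnb : ∀ γ, IsCoin n c γ → p < γ → γ < m → False := by
          intro γ hγc h1' h2'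
          have := le_pc (m := m) hγc h2'
          omega
        have hgap : m ≤ p + (c 3 - 1) := gapm p hplt hpc hp3 hpnb
        -- σ = m - p ; t₁ = c3 - σ = p + c3 - m
        have hoptp3 : opt n c (p + c 3) ≤ 2 := by
          calc opt n c (p + c 3) ≤ opt n c p + opt n c (c 3) := opt_add_le hn h1 _ _
          _ ≤ 2 := by
            have := opt_coin_le hn h1 hpc
            have := opt_coin_le hn h1 hcoin3
            omega
        have hoptpQ : opt n c (p + q * c 2) ≤ 1 + q := by
          calc opt n c (p + q * c 2) ≤ opt n c p + opt n c (q * c 2) := opt_add_le hn h1 _ _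
          _ ≤ 1 + q := by
            have := opt_coin_le hn h1 hpc
            omega
        by_cases ht1 : m = p + (c 3 - 1)
        · -- t₁ = 1
          by_cases hrc : r + 1 = c 2
          · -- corner: CP p, contradiction by IH
            exact absurd ((IH p hplt hpc hp3).2 ⟨hrc, by rw [← ht1]; exact hm,
              fun γ hγc h1' h2' => hpnb γ hγc h1' (by omega)⟩) (by simp)
          · -- r + 1 < c 2
            refine ⟨r + 1, by omega, by omega, ?_⟩
            have he : m + (r + 1) = p + q * c 2 := by omega
            rw [he, tl_small (by omega)]
            omega
        · by_cases ht2 : m + c 2 = p + c 3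
          · -- t₁ = c 2
            rcases Nat.lt_or_ge q 3 with hq3 | hq3
            · -- q = 2
              have hqeq : q = 2 := by omega
              rw [hqeq] at hQ
              refine ⟨r, by omega, by omega, ?_⟩
              have he : m + r = p + c 2 := by omega
              rw [he, tl_small hrlt]
              calc opt n c (p + c 2) ≤ opt n c p + opt n c (c 2) := opt_add_le hn h1 _ _
              _ ≤ r := by
                have := opt_coin_le hn h1 hpc
                have := opt_coin_le hn h1 hcoin2
                omega
            · -- q ≥ 3
              have hQ3 : 3 * c 2 ≤ q * c 2 := Nat.mul_le_mul_right _ hq3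
              refine ⟨c 2 + r, by omega, by omega, ?_⟩
              have he : m + (c 2 + r) = p + q * c 2 := by omega
              rw [he, tl_step hc2pos, tl_small hrlt]
              omega
          · -- generic t₁
            refine ⟨p + c 3 - m, by omega, by omega, ?_⟩
            have he : m + (p + c 3 - m) = p + c 3 := by omega
            rw [he]
            have hge : 2 ≤ tl c (p + c 3 - m) := by
              apply tl_ge_two hc2pos
              · omega
              · omega
              · omega
            omega
  · -- CP → False
    rintro ⟨hrc, hcoin2', hnb⟩
    have pin : ∀ t, 0 < t → t < c 3 - 1 → opt n c (m + t) = tl c t + 1 := by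
      intro t ht0 htd
      refine opt_window hn h1 hmono hcan hm (by omega) (by omega) ?_
      intro γ hγc h1' h2'
      exact hnb γ hγc h1' (by omega)
    rcases eq_or_lt_of_le hm3 with hmeq | hmlt
    · -- base: m = c 3, pin at t = r contradicts opt(q c2) ≤ q
      have hpin := pin r (by omega) (by omega)
      have he : m + r = q * c 2 := by omega
      rw [he, tl_small hrlt] at hpin
      omega
    · -- descent
      set p := ((Finset.Icc 1 n).filter (fun i => c i < m)).sup c with hp
      have hpc : IsCoin n c p := pc_coin hn h1 (by omega)
      have hplt : p < m := pc_lt (by omega)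
      have hp3 : c 3 ≤ p := le_pc hcoin3 hmlt
      have hpnb : ∀ γ, IsCoin n c γ → p < γ → γ < m → False := by
        intro γ hγc h1' h2'
        have := le_pc (m := m) hγc h2'
        omega
      have hgap : m ≤ p + (c 3 - 1) := gapm p hplt hpc hp3 hpnb
      -- (ii) : m - p ≥ c2 - 1, i.e. m + (c2 - (m-p)) = p + c2 would pin cheap value
      have hii : p + c 2 ≤ m + 1 := by
        by_contra hcon
        -- t = p + c2 - m ∈ [2, c2-1]
        have hpin := pin (p + c 2 - m) (by omega) (by omega)
        have he : m + (p + c 2 - m) = p + c 2 := by omega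
        rw [he, tl_small (by omega)] at hpin
        have : opt n c (p + c 2) ≤ 2 := by
          calc opt n c (p + c 2) ≤ opt n c p + opt n c (c 2) := opt_add_le hn h1 _ _
          _ ≤ 2 := by
            have := opt_coin_le hn h1 hpc
            have := opt_coin_le hn h1 hcoin2
            omega
        omega
      -- (iii) : consider p + c3 = m + t₁
      have hoptp3 : opt n c (p + c 3) ≤ 2 := by
        calc opt n c (p + c 3) ≤ opt n c p + opt n c (c 3) := opt_add_le hn h1 _ _
        _ ≤ 2 := by
          have := opt_coin_le hn h1 hpc
          have := opt_coin_le hn h1 hcoin3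
          omega
      by_cases ht1 : m = p + (c 3 - 1)
      · -- t₁ = 1 : descend to CP p
        exact (IH p hplt hpc hp3).2 ⟨hrc, by rw [← ht1]; exact hm,
          fun γ hγc h1' h2' => hpnb γ hγc h1' (by omega)⟩
      · by_cases ht2 : m + c 2 = p + c 3
        · -- t₁ = c 2
          rcases Nat.lt_or_ge q 3 with hq3 | hq3
          · -- q = 2 : σ = c3 - c2 = 1 contradicts (ii) since c2 ≥ 3
            have hqeq : q = 2 := by omega
            rw [hqeq] at hQ
            omega
          · -- q ≥ 3 : pin at T = 2c2 - 1 contradicts opt(p + q c2) ≤ 1 + q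
            have hQ3 : 3 * c 2 ≤ q * c 2 := Nat.mul_le_mul_right _ hq3
            have hpin := pin (2 * c 2 - 1) (by omega) (by omega)
            have he : m + (2 * c 2 - 1) = p + q * c 2 := by omega
            have htlT : tl c (2 * c 2 - 1) = c 2 := by
              have h2c : 2 * c 2 - 1 = c 2 + (c 2 - 1) := by omega
              rw [h2c, tl_step hc2pos, tl_small (by omega)]
              omega
            rw [he, htlT] at hpin
            have : opt n c (p + q * c 2) ≤ 1 + q := by
              calc opt n c (p + q * c 2) ≤ opt n c p + opt n c (q * c 2) := opt_add_le hn h1 _ _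
              _ ≤ 1 + q := by
                have := opt_coin_le hn h1 hpc
                omega
            omega
        · -- generic t₁ : pin contradicts opt(p + c3) ≤ 2
          have hpin := pin (p + c 3 - m) (by omega) (by omega)
          have he : m + (p + c 3 - m) = p + c 3 := by omega
          rw [he] at hpin
          have hge : 2 ≤ tl c (p + c 3 - m) := by
            apply tl_ge_two hc2pos
            · omega
            · omega
            · omega
          omega

include hcan hQ hrlt hq2 hqr in
lemma hard_false : False := by
  have hc23' : c 2 < c 3 := hc23 hn hmono
  have htop : IsCoin n c (c n) := coin_idx hn (i := n) (by omega) (le_refl n)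
  have htop3 : c 3 ≤ c n := c_le_c hn hmono (by omega) hn (le_refl n)
  obtain ⟨j, hj0, hjc, hjo⟩ :=
    (hard_main hn h1 hmono hcan q r hQ hrlt hq2 hqr (c n) htop htop3).1
  obtain ⟨γ, hγc, hγ1, _⟩ := witgap hn h1 hmono hcan htop htop3 hj0 hjc hjo
  have := coin_le_top hn hmono hγc
  omega

end Hard

lemma sum_icc13 (f : ℕ → ℕ) : ∑ i ∈ Finset.Icc 1 3, f i = f 1 + f 2 + f 3 := by
  rw [show (3:ℕ) = 2 + 1 from rfl, Finset.sum_Icc_succ_top (by omega),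
    show (2:ℕ) = 1 + 1 from rfl, Finset.sum_Icc_succ_top (by omega)]
  simp

omit hn hmono in
include h1 in
lemma easy_canonical (hmono3 : StrictMonoOn c (Set.Icc 1 3))
    (q r : ℕ) (hQ : q * c 2 = c 3 + r) (hr : r < c 2) (hlt : r < q) : Canonical 3 c := by
  have h3 : (3:ℕ) ≤ 3 := le_refl 3
  have hc2' : 2 ≤ c 2 := hc2 h3 h1 hmono3
  have hc23' : c 2 < c 3 := hc23 h3 hmono3
  have hq2 : c 2 * q = c 3 + r := by rw [← hQ]; ring
  have key : ∀ v, grd 3 c v ≤ opt 3 c v := by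
    intro v
    induction v using Nat.strong_induction_on with
    | _ v IH =>
      obtain ⟨x, hx, hs⟩ := opt_spec h3 h1 v
      unfold IsRepr at hx
      rw [sum_icc13] at hx hs
      rw [h1, one_mul] at hx
      rcases Nat.eq_zero_or_pos v with rfl | hpos
      · rw [grd_zero]; omega
      rcases Nat.lt_or_ge v (c 3) with hsm | hbg
      · -- small values: greedy = tl, optimal ≥ tl
        have hx3 : x 3 = 0 := by
          by_contra hh
          have : c 3 ≤ c 3 * x 3 := Nat.le_mul_of_pos_right _ (by omega)
          omega
        rw [hx3, Nat.mul_zero] at hx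
        rw [grd_small h3 h1 hmono3 _ hsm]
        have htl := tl_combo (c := c) (by omega) (x 2) (x 1)
        have heq : tl c v = tl c (c 2 * x 2 + x 1) := congrArg (tl c) (by omega)
        omega
      · -- big values: greedy takes c 3
        have hmc : mcoin 3 c v = c 3 := by
          refine mcoin_eq h3 h1 ⟨3, by rw [Finset.mem_Icc]; omega, rfl⟩ hbg ?_
          intro γ hγ hlt' hle'
          obtain ⟨i, hi, rfl⟩ := hγ
          rw [Finset.mem_Icc] at hi
          have := c_le_c h3 hmono3 hi.1 hi.2 (le_refl 3)
          omega
        have hstep : grd 3 c v = grd 3 c (v - c 3) + 1 := by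
          rw [grd_succ (by omega) (by rw [hmc]; omega), hmc]
        have hIH : grd 3 c (v - c 3) ≤ opt 3 c (v - c 3) := IH _ (by omega)
        rcases Nat.eq_zero_or_pos (x 3) with hx3 | hx3
        · -- no c3 coin in optimal repr
          rw [hx3, Nat.mul_zero] at hx
          have hv : x 1 + c 2 * x 2 = v := by omega
          rcases Nat.lt_or_ge (x 2) q with hx2 | hx2
          · -- few c2 coins: v - c3 is small
            have hmul : c 2 * x 2 + c 2 ≤ c 2 * q := by
              have := Nat.mul_le_mul_left (c 2) (show x 2 + 1 ≤ q by omega)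
              rw [Nat.mul_add] at this
              omega
            have := opt_le_self h3 h1 (v - c 3)
            omega
          · -- at least q coins of c2: exchange q·c2 = c3 + r
            have hmul : c 2 * (x 2 - q) + (c 2 * q) = c 2 * x 2 := by
              rw [← Nat.mul_add]
              congr 1
              omega
            have hrep : opt 3 c (v - c 3) ≤ (x 1 + r) + (x 2 - q) := by
              refine opt_le_of_repr h3 h1
                (fun i => if i = 1 then x 1 + r else if i = 2 then x 2 - q else 0) ?_ ?_
              · unfold IsRepr
                rw [sum_icc13]
                simp only [h1]
                norm_num
                omega
              · rw [sum_icc13]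
                norm_num
            calc grd 3 c v = grd 3 c (v - c 3) + 1 := hstep
            _ ≤ opt 3 c (v - c 3) + 1 := by omega
            _ ≤ (x 1 + r) + (x 2 - q) + 1 := by omega
            _ ≤ x 1 + x 2 := by omega
            _ ≤ opt 3 c v := by omega
        · -- optimal repr uses a c3 coin
          have hrep : opt 3 c (v - c 3) ≤ x 1 + x 2 + (x 3 - 1) := by
            refine opt_le_of_repr h3 h1
              (fun i => if i = 1 then x 1 else if i = 2 then x 2 else if i = 3 then x 3 - 1 else 0) ?_ ?_
            · unfold IsRepr
              rw [sum_icc13]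
              simp only [h1]
              norm_num
              have : c 3 * (x 3 - 1) + c 3 = c 3 * x 3 := by
                rw [← Nat.mul_succ]
                congr 1
                omega
              omega
            · rw [sum_icc13]
              norm_num
          omega
  intro v hv
  exact le_antisymm (opt_le_grd h3 h1 hmono3 v) (key v)

end Dev

/-- The three-coin prefix of a canonical system is canonical. -/
theorem canonical_prefix_three (n : ℕ) (c : ℕ → ℕ) (hn : 3 ≤ n)
    (hsys : IsSystem n c) (h : Canonical n c) :
    Canonical 3 c := by
  obtain ⟨h1, hmono⟩ := hsys
  have hmono3 : StrictMonoOn c (Set.Icc 1 3) := by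
    apply hmono.mono
    intro x hx
    rw [Set.mem_Icc] at *
    omega
  have hc2' : 2 ≤ c 2 := hc2 hn h1 hmono
  have hc23' : c 2 < c 3 := hc23 hn hmono
  -- decompose: q * c 2 = c 3 + r with r < c 2 and q ≥ 2
  obtain ⟨q, r, hQ, hrlt, hq2⟩ :
      ∃ q r, q * c 2 = c 3 + r ∧ r < c 2 ∧ 2 ≤ q := by
    rcases Nat.eq_zero_or_pos (c 3 % c 2) with hz | hz
    · refine ⟨c 3 / c 2, 0, ?_, by omega, ?_⟩
      · have := Nat.div_add_mod (c 3) (c 2)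
        have h2 : c 2 * (c 3 / c 2) = c 3 := by omega
        rw [Nat.mul_comm] at h2
        omega
      · by_contra hcon
        have hd : c 3 / c 2 ≤ 1 := by omega
        have := Nat.div_add_mod (c 3) (c 2)
        have h2 : c 2 * (c 3 / c 2) ≤ c 2 * 1 := Nat.mul_le_mul_left _ hd
        omega
    · refine ⟨c 3 / c 2 + 1, c 2 - c 3 % c 2, ?_, by omega, ?_⟩
      · have := Nat.div_add_mod (c 3) (c 2)
        have hm : c 3 % c 2 < c 2 := Nat.mod_lt _ (by omega)
        have h2 : (c 3 / c 2 + 1) * c 2 = c 2 * (c 3 / c 2) + c 2 := by ring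
        omega
      · have hd : 1 ≤ c 3 / c 2 := by
          apply Nat.one_le_div_iff (by omega) |>.mpr
          omega
        omega
  rcases Nat.lt_or_ge r q with hlt | hge
  · exact easy_canonical h1 hmono3 q r hQ hrlt hlt
  · exact absurd (hard_false hn h1 hmono h q r hQ hrlt hq2 hge) (by simp)
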